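/- Let T = (k^×)^n (k a field) with the twisted conjugation action of T on itself given by (t₁,...,tₙ) · (t'₁,...,t'ₙ) = (tₙ⁻¹t₁t'₁, t₁⁻¹t₂t'₂, ..., t_{n−1}⁻¹tₙt'ₙ). Then two elements of T are in the same orbit if and only if they have the same product of coordinates (determinant), and the stabilizer of every point is the diagonal copy of k^× (the scalars). -/

import Mathlib

/-- Let `T = (kˣ)^n` with the twisted conjugation action of `T` on
itself, `(t₁,…,tₙ) · (t'₁,…,t'ₙ) = (tₙ⁻¹ t₁ t'₁, t₁⁻¹ t₂ t'₂, …, t_{n-1}⁻¹ tₙ t'ₙ)`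
(indices cyclic, i.e. the `i`-th coordinate of `a · t'` is `(a_{i-1})⁻¹ a_i t'_i`).
Two elements of `T` are in the same orbit iff they have the same product of
coordinates (determinant), and the stabilizer of every point is the diagonal copy
of `kˣ` (the scalars). -/
theorem stmt7 (k : Type*) [Field k] (n : ℕ) [NeZero n] :
    (∀ t' t'' : Fin n → kˣ,
      (∃ a : Fin n → kˣ, ∀ i, (a (i - 1))⁻¹ * a i * t' i = t'' i) ↔
        ∏ i, t' i = ∏ i, t'' i) ∧
    (∀ a t' : Fin n → kˣ,
      (∀ i, (a (i - 1))⁻¹ * a i * t' i = t' i) ↔ ∃ c : kˣ, ∀ i, a i = c) := by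
  obtain ⟨m, rfl⟩ : ∃ m, n = m + 1 := ⟨n - 1, (Nat.succ_pred_eq_of_pos (NeZero.pos n)).symm⟩
  constructor
  · intro t' t''
    constructor
    · rintro ⟨a, h⟩
      have he : ∏ i, t'' i = ∏ i, ((a (i - 1))⁻¹ * a i * t' i) :=
        Finset.prod_congr rfl fun i _ => (h i).symm
      have h2 : ∏ i : Fin (m + 1), a (i - 1) = ∏ i, a i :=
        Fintype.prod_equiv (Equiv.subRight 1) _ _ (fun i => rfl)
      rw [he, Finset.prod_mul_distrib, Finset.prod_mul_distrib]
      rw [show (∏ i : Fin (m + 1), (a (i - 1))⁻¹) = (∏ i : Fin (m + 1), a (i - 1))⁻¹ by simp, h2]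
      group
    · intro hprod
      set d : Fin (m + 1) → kˣ := fun i => t'' i * (t' i)⁻¹ with hd
      refine ⟨fun i => ∏ j ∈ Finset.Iic i, d j, fun i => ?_⟩
      dsimp only
      by_cases hi : i = 0
      · subst hi
        have h1 : Finset.Iic ((0 : Fin (m + 1)) - 1) = Finset.univ := by
          ext j
          rw [Finset.mem_Iic, Fin.le_def, Fin.coe_sub_one, if_pos rfl]
          simp only [Finset.mem_univ, iff_true]
          have := j.isLt
          omega
        have h2 : Finset.Iic (0 : Fin (m + 1)) = {0} := by
          ext j
          simp only [Finset.mem_Iic, Finset.mem_singleton, Fin.le_def, Fin.ext_iff, Fin.val_zero, Nat.le_zero]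
        rw [h1, h2]
        have h3 : ∏ j, d j = 1 := by
          rw [hd, Finset.prod_mul_distrib,
            show (∏ x, (t' x)⁻¹) = (∏ x, t' x)⁻¹ by simp, hprod]
          simp
        rw [h3, Finset.prod_singleton]
        simp [hd, mul_assoc]
      · have hv : i.val ≠ 0 := fun h => hi (Fin.ext h)
        have hlt : i - 1 < i := by
          rw [Fin.lt_def, Fin.coe_sub_one, if_neg hi]
          omega
        have h1 : Finset.Iic i = insert i (Finset.Iic (i - 1)) := by
          ext j
          simp only [Finset.mem_Iic, Finset.mem_insert]
          constructor
          · intro hj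
            rcases eq_or_lt_of_le hj with h | h
            · exact Or.inl h
            · right
              rw [Fin.le_def, Fin.coe_sub_one, if_neg hi]
              rw [Fin.lt_def] at h
              omega
          · rintro (rfl | hj)
            · exact le_refl _
            · exact le_of_lt (lt_of_le_of_lt hj hlt)
        have h2 : i ∉ Finset.Iic (i - 1) := by
          simp only [Finset.mem_Iic]
          exact not_le_of_gt hlt
        rw [h1, Finset.prod_insert h2, mul_comm (d i), inv_mul_cancel_left, hd]
        dsimp only
        rw [inv_mul_cancel_right]
  · intro a t'
    constructor
    · intro h
      have h' : ∀ i : Fin (m + 1), a i = a (i - 1) := by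
        intro i
        have hc : (a (i - 1))⁻¹ * a i = 1 :=
          mul_right_cancel ((h i).trans (one_mul _).symm)
        calc a i = a (i - 1) * ((a (i - 1))⁻¹ * a i) := by group
        _ = a (i - 1) := by rw [hc, mul_one]
      refine ⟨a 0, fun i => ?_⟩
      open Fin.NatCast in
      have key : ∀ p : ℕ, a ((p : Fin (m + 1))) = a 0 := by
        intro p
        induction p with
        | zero => simp
        | succ p ih =>
          have hcast : ((p + 1 : ℕ) : Fin (m + 1)) = (p : Fin (m + 1)) + 1 := by
            push_cast; ring
          rw [hcast]
          have h3 := h' ((p : Fin (m + 1)) + 1)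
          rw [add_sub_cancel_right] at h3
          exact h3.trans ih
      have := key i.val
      rwa [Fin.cast_val_eq_self] at this
    · rintro ⟨c, hc⟩ i
      rw [hc, hc]
      group
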